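/- Let K be a field of characteristic 0, a ∈ K, n, k ≥ 1 integers, f_1,…,f_n ∈ K[u], and Q_1,…,Q_n polynomials in n(k+1)+2 variables over K. Then the system F_i = f_i(u) + t·Q_i(F_1, Δ_a F_1, …, Δ_a^k F_1, …, F_n, Δ_a F_n, …, Δ_a^k F_n, t, u), i = 1,…,n, admits a (unique) solution vector (F_1,…,F_n) ∈ (K[u][[t]])^n, constructed by iterating the fixed-point map: the coefficient of t^m of each F_i is determined recursively from the coefficients of t^0,…,t^{m−1}. -/

import Mathlib

open Polynomial PowerSeries

/-- Divided difference on polynomials: `p ↦ (p - p(a))/(u - a)`. -/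
noncomputable def deltaP {R : Type*} [CommRing R] (a : R) (p : Polynomial R) : Polynomial R :=
  (p - Polynomial.C (p.eval a)) /ₘ (Polynomial.X - Polynomial.C a)

/-- The divided-difference operator `Δ_a` on `R[u][[t]]`, acting coefficientwise in `t`. -/
noncomputable def delta {R : Type*} [CommRing R] (a : R) (F : PowerSeries (Polynomial R)) :
    PowerSeries (Polynomial R) :=
  PowerSeries.mk fun m => deltaP a (PowerSeries.coeff m F)

/-- The argument vector `(∇^k F_1, …, ∇^k F_n, t, u)` used to substitute into the `Q_i`. -/
noncomputable def sysArgs {R : Type*} [CommRing R] (a : R) (n k : ℕ)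
    (F : Fin n → PowerSeries (Polynomial R)) (tval : PowerSeries (Polynomial R)) :
    Fin (n * (k + 1) + 2) → PowerSeries (Polynomial R) := fun j =>
  if h : (j : ℕ) < n * (k + 1) then
    (delta a)^[(j : ℕ) % (k + 1)]
      (F ⟨(j : ℕ) / (k + 1), (Nat.div_lt_iff_lt_mul (Nat.succ_pos k)).mpr h⟩)
  else if (j : ℕ) = n * (k + 1) then tval
  else PowerSeries.C Polynomial.X

section Aux

variable {K : Type*} [CommRing K]

lemma coeff_delta (a : K) (F : PowerSeries (Polynomial K)) (m : ℕ) :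
    PowerSeries.coeff m (delta a F) = deltaP a (PowerSeries.coeff m F) := by
  simp [delta]

lemma coeff_delta_iter (a : K) (r : ℕ) {F G : PowerSeries (Polynomial K)} {m : ℕ}
    (h : PowerSeries.coeff m F = PowerSeries.coeff m G) :
    PowerSeries.coeff m ((delta a)^[r] F) = PowerSeries.coeff m ((delta a)^[r] G) := by
  induction r with
  | zero => simpa using h
  | succ r ih =>
      rw [Function.iterate_succ_apply', Function.iterate_succ_apply', coeff_delta, coeff_delta, ih]

lemma aeval_agree {N : ℕ} (m : ℕ) (args args' : Fin N → PowerSeries (Polynomial K))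
    (h : ∀ i j, j < m → PowerSeries.coeff j (args i) = PowerSeries.coeff j (args' i))
    (q : MvPolynomial (Fin N) K) :
    ∀ j < m, PowerSeries.coeff j (MvPolynomial.aeval args q) =
      PowerSeries.coeff j (MvPolynomial.aeval args' q) := by
  induction q using MvPolynomial.induction_on with
  | C c => intro j hj; simp
  | add p q hp hq => intro j hj; simp only [map_add]; rw [hp j hj, hq j hj]
  | mul_X p i hp =>
      intro j hj
      simp only [map_mul, MvPolynomial.aeval_X, PowerSeries.coeff_mul]
      refine Finset.sum_congr rfl fun x hx => ?_
      replace hx : x.1 + x.2 = j := Finset.HasAntidiagonal.mem_antidiagonal.mp hx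
      rw [hp x.1 (lt_of_le_of_lt (by omega) hj), h i x.2 (lt_of_le_of_lt (by omega) hj)]

lemma sysArgs_agree (a : K) (n k m : ℕ) (F F' : Fin n → PowerSeries (Polynomial K))
    (h : ∀ i j, j < m → PowerSeries.coeff j (F i) = PowerSeries.coeff j (F' i)) :
    ∀ (idx : Fin (n * (k + 1) + 2)) j, j < m →
      PowerSeries.coeff j (sysArgs a n k F PowerSeries.X idx) =
        PowerSeries.coeff j (sysArgs a n k F' PowerSeries.X idx) := by
  intro idx j hj
  unfold sysArgs
  split_ifs with h1 h2
  · exact coeff_delta_iter a _ (h _ j hj)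
  · rfl
  · rfl

/-- The fixed-point map of the system. -/
noncomputable def Gmap (a : K) (n k : ℕ) (f : Fin n → Polynomial K)
    (Q : Fin n → MvPolynomial (Fin (n * (k + 1) + 2)) K)
    (F : Fin n → PowerSeries (Polynomial K)) : Fin n → PowerSeries (Polynomial K) := fun i =>
  PowerSeries.C (f i) +
    PowerSeries.X * MvPolynomial.aeval (sysArgs a n k F PowerSeries.X) (Q i)

lemma coeff_Gmap (a : K) (n k : ℕ) (f : Fin n → Polynomial K)
    (Q : Fin n → MvPolynomial (Fin (n * (k + 1) + 2)) K) (m : ℕ)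
    (F F' : Fin n → PowerSeries (Polynomial K))
    (h : ∀ i j, j < m → PowerSeries.coeff j (F i) = PowerSeries.coeff j (F' i))
    (i : Fin n) (j : ℕ) (hj : j ≤ m) :
    PowerSeries.coeff j (Gmap a n k f Q F i) = PowerSeries.coeff j (Gmap a n k f Q F' i) := by
  unfold Gmap
  simp only [map_add]
  rw [add_right_inj]
  cases j with
  | zero => rw [PowerSeries.coeff_zero_X_mul, PowerSeries.coeff_zero_X_mul]
  | succ j' =>
      rw [PowerSeries.coeff_succ_X_mul, PowerSeries.coeff_succ_X_mul]
      exact aeval_agree m _ _ (sysArgs_agree a n k m F F' h) (Q i) j' (by omega)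

/-- The coefficients of the solution, defined by strong recursion. -/
noncomputable def solCoeff (a : K) (n k : ℕ) (f : Fin n → Polynomial K)
    (Q : Fin n → MvPolynomial (Fin (n * (k + 1) + 2)) K) : ℕ → Fin n → Polynomial K
  | m => fun i =>
      PowerSeries.coeff m
        (Gmap a n k f Q
          (fun i' => PowerSeries.mk fun j => if h : j < m then solCoeff a n k f Q j i' else 0) i)

/-- The solution power series vector. -/
noncomputable def solF (a : K) (n k : ℕ) (f : Fin n → Polynomial K)
    (Q : Fin n → MvPolynomial (Fin (n * (k + 1) + 2)) K) : Fin n → PowerSeries (Polynomial K) :=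
  fun i => PowerSeries.mk fun m => solCoeff a n k f Q m i

lemma solF_fixed (a : K) (n k : ℕ) (f : Fin n → Polynomial K)
    (Q : Fin n → MvPolynomial (Fin (n * (k + 1) + 2)) K) (i : Fin n) :
    solF a n k f Q i = Gmap a n k f Q (solF a n k f Q) i := by
  refine PowerSeries.ext fun m => ?_
  rw [solF, PowerSeries.coeff_mk, solCoeff]
  refine coeff_Gmap a n k f Q m _ _ ?_ i m le_rfl
  intro i' j hj
  simp [PowerSeries.coeff_mk, hj, solF]

end Aux

/-- The system `F_i = f_i(u) + t·Q_i(∇^k F_1, …, ∇^k F_n, t, u)` admits exactly one vector of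
solutions in `(K[u][[t]])^n` (existence by the t-adic fixed-point iteration, plus uniqueness). -/
theorem system_solution_existsUnique {K : Type*} [Field K] [CharZero K] (a : K) (n k : ℕ)
    (hn : 1 ≤ n) (hk : 1 ≤ k) (f : Fin n → Polynomial K)
    (Q : Fin n → MvPolynomial (Fin (n * (k + 1) + 2)) K) :
    ∃! F : Fin n → PowerSeries (Polynomial K),
      ∀ i, F i = PowerSeries.C (f i) +
        PowerSeries.X * MvPolynomial.aeval (sysArgs a n k F PowerSeries.X) (Q i) := by
  refine ⟨solF a n k f Q, fun i => solF_fixed a n k f Q i, ?_⟩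
  intro F hF
  have key : ∀ m, ∀ i, PowerSeries.coeff m (F i) = PowerSeries.coeff m (solF a n k f Q i) := by
    intro m
    induction m using Nat.strong_induction_on with
    | _ m ih =>
        intro i
        have h1 : F i = Gmap a n k f Q F i := hF i
        rw [h1, solF_fixed a n k f Q i]
        exact coeff_Gmap a n k f Q m F _ (fun i' j hj => ih j hj i') i m le_rfl
  funext i
  exact PowerSeries.ext fun m => key m i
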